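/- Let λ₁, λ₂ > 0 and let f_Z(·; λ₁, λ₂) be the Skellam(λ₁,λ₂) probability mass function on ℤ, i.e., the mass function of X - Y where X, Y are independent Poisson(λ₁) and Poisson(λ₂) random variables. Define g_Z(k) = (-1)^k f_Z(k; λ₁, λ₂). Then the discrete convolution (g_Z ⋆ f_Z)(k) equals e^{-2(λ₁+λ₂)} if k = 0 and 0 otherwise. -/

import Mathlib

open Finset

noncomputable def pois (lam : ℝ) : ℤ → ℝ := fun m =>
  if 0 ≤ m then Real.exp (-lam) * lam ^ m.toNat / Nat.factorial m.toNat else 0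

lemma pois_nonneg {lam : ℝ} (h : 0 ≤ lam) (m : ℤ) : 0 ≤ pois lam m := by
  unfold pois; split
  · positivity
  · exact le_refl 0
  
lemma pois_le_one {lam : ℝ} (h : 0 ≤ lam) (m : ℤ) : pois lam m ≤ 1 := by
  unfold pois; split
  · have h1 : lam ^ m.toNat / Nat.factorial m.toNat ≤ Real.exp lam := by
      calc lam ^ m.toNat / Nat.factorial m.toNat
          ≤ ∑ i ∈ range (m.toNat + 1), lam ^ i / Nat.factorial i := by
            apply Finset.single_le_sum (f := fun i => lam ^ i / (Nat.factorial i : ℝ))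
            · intro i _; positivity
            · simp
        _ ≤ Real.exp lam := Real.sum_le_exp_of_nonneg h _
    calc Real.exp (-lam) * lam ^ m.toNat / Nat.factorial m.toNat
        = Real.exp (-lam) * (lam ^ m.toNat / Nat.factorial m.toNat) := by ring
      _ ≤ Real.exp (-lam) * Real.exp lam := by
          exact mul_le_mul_of_nonneg_left h1 (Real.exp_nonneg _)
      _ = 1 := by rw [← Real.exp_add]; simp
  · norm_num

lemma summable_pois {lam : ℝ} (h : 0 ≤ lam) : Summable (pois lam) := by
  rw [summable_int_iff_summable_nat_and_neg]
  constructor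
  · have : (fun n : ℕ => pois lam n) = fun n : ℕ => Real.exp (-lam) * (lam ^ n / Nat.factorial n) := by
      funext n; unfold pois; simp [Int.toNat_natCast]; ring
    rw [this]
    exact (Real.summable_pow_div_factorial lam).mul_left _
  · apply summable_of_ne_finset_zero (s := {0})
    intro n hn
    simp at hn
    unfold pois
    rw [if_neg]
    omega

lemma key_conv {lam : ℝ} (hl : 0 < lam) (s : ℤ) :
    ∑' m : ℤ, ((-1:ℝ)^m * pois lam m) * pois lam (s - m)
      = if s = 0 then Real.exp (-(2*lam)) else 0 := by
  by_cases hs : 0 ≤ s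
  · set K := s.toNat with hK
    have hsK : s = (K : ℤ) := by omega
    set S : Finset ℤ := (range (K+1)).map ⟨(fun n : ℕ => (n:ℤ)), Nat.cast_injective⟩ with hS
    have hzero : ∀ m : ℤ, m ∉ S → ((-1:ℝ)^m * pois lam m) * pois lam (s - m) = 0 := by
      intro m hm
      by_cases h0 : 0 ≤ m
      · by_cases h1 : m ≤ s
        · exfalso; apply hm; rw [hS, mem_map]
          refine ⟨m.toNat, ?_, by simp; omega⟩
          rw [mem_range]; omega
        · have hneg : ¬ (0 ≤ s - m) := by omega
          simp only [pois]; rw [if_neg hneg]; ring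
      · simp only [pois]; rw [if_neg h0]; ring
    rw [tsum_eq_sum hzero, hS, Finset.sum_map]
    simp only [Function.Embedding.coeFn_mk]
    have hterm : ∀ n ∈ range (K+1),
        ((-1:ℝ)^(n:ℤ) * pois lam (n:ℤ)) * pois lam (s - (n:ℤ))
        = Real.exp (-lam) * Real.exp (-lam) / Nat.factorial K *
            ((-lam)^n * lam^(K-n) * (K.choose n : ℝ)) := by
      intro n hn
      rw [mem_range] at hn
      have hnK : n ≤ K := by omega
      have hc : (K.choose n : ℝ) * (Nat.factorial n) * (Nat.factorial (K-n)) = Nat.factorial K := by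
        exact_mod_cast congrArg (Nat.cast (R := ℝ)) (Nat.choose_mul_factorial_mul_factorial hnK)
      have e1 : pois lam (n:ℤ) = Real.exp (-lam) * lam ^ n / Nat.factorial n := by
        simp only [pois]; rw [if_pos (by positivity)]; simp
      have e2 : pois lam (s - (n:ℤ)) = Real.exp (-lam) * lam ^ (K - n) / Nat.factorial (K-n) := by
        have h2 : (s - (n:ℤ)).toNat = K - n := by omega
        simp only [pois]; rw [if_pos (by omega), h2]
      rw [e1, e2, zpow_natCast, neg_pow]
      have hfn : (Nat.factorial n : ℝ) ≠ 0 := by positivity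
      have hfkn : (Nat.factorial (K-n) : ℝ) ≠ 0 := by positivity
      have hfk : (Nat.factorial K : ℝ) ≠ 0 := by positivity
      field_simp
      linear_combination (-(lam^n * ((-1:ℝ))^n)) * hc
    rw [Finset.sum_congr rfl hterm, ← Finset.mul_sum, ← add_pow (-lam) lam K]
    have hz : -lam + lam = 0 := by ring
    rw [hz, zero_pow_eq]
    have hKs : (K = 0) ↔ (s = 0) := by omega
    by_cases h0 : s = 0
    · rw [if_pos h0, if_pos (hKs.mpr h0)]
      have : K = 0 := hKs.mpr h0
      rw [this]
      simp only [Nat.factorial, Nat.cast_one, mul_one, div_one, ← Real.exp_add]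
      congr 1; ring
    · rw [if_neg h0, if_neg (fun h => h0 (hKs.mp h))]
      ring
  · rw [if_neg (by omega)]
    have hzero : ∀ m : ℤ, ((-1:ℝ)^m * pois lam m) * pois lam (s - m) = 0 := by
      intro m
      by_cases h0 : 0 ≤ m
      · simp only [pois]; rw [if_neg (by omega : ¬ (0 ≤ s - m))]; ring
      · simp only [pois]; rw [if_neg h0]; ring
    simp only [hzero, tsum_zero]


lemma summable_of_abs_le {α : Type*} {f g : α → ℝ} (hg : Summable g)
    (h : ∀ x, |f x| ≤ g x) : Summable f :=
  summable_abs_iff.mp (hg.of_nonneg_of_le (fun x => abs_nonneg _) h)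

lemma le4 {a b c d : ℝ} (ha0 : 0 ≤ a) (ha1 : a ≤ 1) (hb0 : 0 ≤ b) (hb1 : b ≤ 1)
    (hc0 : 0 ≤ c) (hc1 : c ≤ 1) (hd0 : 0 ≤ d) : a * b * (c * d) ≤ d := by
  nlinarith [mul_nonneg hc0 hd0, mul_nonneg hb0 (mul_nonneg hc0 hd0)]

def Ek (k : ℤ) : (ℤ × ℤ × ℤ) ≃ (ℤ × ℤ × ℤ) where
  toFun p := (p.2.1 + p.2.2, k - p.1 - p.2.1 - p.2.2, p.2.2)
  invFun p := (k - p.1 - p.2.1, p.1 - p.2.2, p.2.2)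
  left_inv p := by obtain ⟨m, n, b⟩ := p; simp [Prod.ext_iff]; omega
  right_inv p := by obtain ⟨j, a, b⟩ := p; simp [Prod.ext_iff]; omega

set_option maxHeartbeats 1000000 in

set_option maxHeartbeats 1000000 in
theorem stmt_7 (lam1 lam2 : ℝ) (h1 : 0 < lam1) (h2 : 0 < lam2)
    (fX fY fZ gZ : ℤ → ℝ)
    (hfX : ∀ m : ℤ, fX m =
      if 0 ≤ m then Real.exp (-lam1) * lam1 ^ m.toNat / Nat.factorial m.toNat else 0)
    (hfY : ∀ m : ℤ, fY m =
      if m ≤ 0 then Real.exp (-lam2) * lam2 ^ (-m).toNat / Nat.factorial (-m).toNat else 0)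
    (hfZ : ∀ k : ℤ, fZ k = ∑' j : ℤ, fX (k - j) * fY j)
    (hgZ : ∀ k : ℤ, gZ k = (-1 : ℝ) ^ k * fZ k) :
    ∀ k : ℤ, ∑' j : ℤ, gZ (k - j) * fZ j
      = if k = 0 then Real.exp (-(2 * (lam1 + lam2))) else 0 := by
  intro k
  -- abbreviations
  set gX : ℤ → ℝ := fun m => (-1:ℝ)^m * pois lam1 m with hgXd
  set gY : ℤ → ℝ := fun m => (-1:ℝ)^m * pois lam2 (-m) with hgYd
  have hfX' : ∀ m, fX m = pois lam1 m := fun m => hfX m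
  have hfY' : ∀ m, fY m = pois lam2 (-m) := by
    intro m; rw [hfY m]; simp only [pois, neg_nonneg]
  have hneg1 : (-1:ℝ) ≠ 0 := by norm_num
  have habs1 : ∀ m : ℤ, |(-1:ℝ)^m| = 1 := by
    intro m
    rcases Int.even_or_odd m with h | h
    · rw [h.neg_one_zpow, abs_one]
    · rw [h.neg_one_zpow, abs_neg, abs_one]
  have habs_gX : ∀ m, |gX m| = pois lam1 m := by
    intro m
    rw [hgXd, abs_mul, habs1, one_mul, abs_of_nonneg (pois_nonneg h1.le m)]
  have habs_gY : ∀ m, |gY m| = pois lam2 (-m) := by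
    intro m
    rw [hgYd, abs_mul, habs1, one_mul, abs_of_nonneg (pois_nonneg h2.le (-m))]
  have habs_fX : ∀ m, |fX m| = pois lam1 m := by
    intro m; rw [hfX' m, abs_of_nonneg (pois_nonneg h1.le m)]
  have habs_fY : ∀ m, |fY m| = pois lam2 (-m) := by
    intro m; rw [hfY' m, abs_of_nonneg (pois_nonneg h2.le (-m))]
  have habs_pg : ∀ x y : ℤ, |gX x * gY y| = pois lam1 x * pois lam2 (-y) := by
    intro x y; rw [abs_mul, habs_gX, habs_gY]
  have habs_pf : ∀ x y : ℤ, |fX x * fY y| = pois lam1 x * pois lam2 (-y) := by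
    intro x y; rw [abs_mul, habs_fX, habs_fY]
  have SX : Summable (pois lam1) := summable_pois h1.le
  have SYneg : Summable (fun m : ℤ => pois lam2 (-m)) :=
    ((Equiv.neg ℤ).summable_iff (f := pois lam2)).mpr (summable_pois h2.le)
  -- gZ as a convolution
  have hgZ' : ∀ m : ℤ, gZ m = ∑' a : ℤ, gX (m - a) * gY a := by
    intro m
    rw [hgZ m, hfZ m, ← tsum_mul_left]
    apply tsum_congr; intro a
    rw [hfX', hfY', hgXd, hgYd]
    have hsgn : (-1:ℝ)^(m-a) * (-1:ℝ)^a = (-1:ℝ)^m := by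
      rw [← zpow_add₀ hneg1]; congr 1; ring
    rw [← hsgn]; ring
  -- summability facts
  have hA : ∀ j : ℤ, Summable fun a : ℤ => ‖gX (k - j - a) * gY a‖ := by
    intro j
    apply Summable.of_nonneg_of_le (fun a => norm_nonneg _) ?_ SYneg
    intro a
    rw [Real.norm_eq_abs, abs_mul, habs_gX, habs_gY]
    exact mul_le_of_le_one_left (pois_nonneg h2.le _) (pois_le_one h1.le _)
  have hB : ∀ j : ℤ, Summable fun b : ℤ => ‖fX (j - b) * fY b‖ := by
    intro j
    apply Summable.of_nonneg_of_le (fun b => norm_nonneg _) ?_ SYneg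
    intro b
    rw [Real.norm_eq_abs, abs_mul, habs_fX, habs_fY]
    exact mul_le_of_le_one_left (pois_nonneg h2.le _) (pois_le_one h1.le _)
  have base2 : Summable fun q : ℤ × ℤ => pois lam2 (-q.1) * pois lam2 (-q.2) := by
    apply Summable.mul_of_nonneg SYneg SYneg (fun _ => pois_nonneg h2.le _)
      (fun _ => pois_nonneg h2.le _)
  have hTj : ∀ j : ℤ, Summable fun q : ℤ × ℤ =>
      (gX (k - j - q.1) * gY q.1) * (fX (j - q.2) * fY q.2) := by
    intro j
    apply summable_of_abs_le base2
    intro q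
    rw [abs_mul]
    refine mul_le_mul ?_ ?_ (abs_nonneg _) (pois_nonneg h2.le _)
    · rw [abs_mul, habs_gX, habs_gY]
      exact mul_le_of_le_one_left (pois_nonneg h2.le _) (pois_le_one h1.le _)
    · rw [abs_mul, habs_fX, habs_fY]
      exact mul_le_of_le_one_left (pois_nonneg h2.le _) (pois_le_one h1.le _)
  -- the nice reindexed function S
  have baseS : Summable fun p : ℤ × ℤ × ℤ =>
      pois lam1 p.1 * (pois lam1 p.2.1 * pois lam2 (-p.2.2)) := by
    have inner : Summable fun q : ℤ × ℤ => pois lam1 q.1 * pois lam2 (-q.2) := by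
      apply Summable.mul_of_nonneg SX SYneg (fun _ => pois_nonneg h1.le _)
        (fun _ => pois_nonneg h2.le _)
    apply Summable.mul_of_nonneg SX inner (fun _ => pois_nonneg h1.le _)
      (fun q => mul_nonneg (pois_nonneg h1.le _) (pois_nonneg h2.le _))
  have hS : Summable fun p : ℤ × ℤ × ℤ =>
      (gX p.1 * gY (k - p.1 - p.2.1 - p.2.2)) * (fX p.2.1 * fY p.2.2) := by
    apply summable_of_abs_le baseS
    intro p
    rw [abs_mul, habs_pg, habs_pf]
    exact mul_le_mul_of_nonneg_right
      (mul_le_of_le_one_right (pois_nonneg h1.le _) (pois_le_one h2.le _))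
      (mul_nonneg (pois_nonneg h1.le _) (pois_nonneg h2.le _))
  have hSm : ∀ m : ℤ, Summable fun q : ℤ × ℤ =>
      (gX m * gY (k - m - q.1 - q.2)) * (fX q.1 * fY q.2) := by
    intro m
    have base : Summable fun q : ℤ × ℤ => pois lam1 q.1 * pois lam2 (-q.2) := by
      apply Summable.mul_of_nonneg SX SYneg (fun _ => pois_nonneg h1.le _)
        (fun _ => pois_nonneg h2.le _)
    apply summable_of_abs_le base
    intro q
    rw [abs_mul, habs_pg, habs_pf]
    exact mul_le_of_le_one_left
      (mul_nonneg (pois_nonneg h1.le _) (pois_nonneg h2.le _))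
      (mul_le_one₀ (pois_le_one h1.le _) (pois_nonneg h2.le _) (pois_le_one h2.le _))
  have hSmn : ∀ m n : ℤ, Summable fun b : ℤ =>
      (gX m * gY (k - m - n - b)) * (fX n * fY b) := by
    intro m n
    apply summable_of_abs_le SYneg
    intro b
    rw [abs_mul, habs_pg, habs_pf]
    exact le4 (pois_nonneg h1.le _) (pois_le_one h1.le _) (pois_nonneg h2.le _)
      (pois_le_one h2.le _) (pois_nonneg h1.le _) (pois_le_one h1.le _) (pois_nonneg h2.le _)
  have hT : Summable fun p : ℤ × ℤ × ℤ =>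
      (gX (k - p.1 - p.2.1) * gY p.2.1) * (fX (p.1 - p.2.2) * fY p.2.2) := by
    rw [← (Ek k).summable_iff]
    have : ((fun p : ℤ × ℤ × ℤ =>
        (gX (k - p.1 - p.2.1) * gY p.2.1) * (fX (p.1 - p.2.2) * fY p.2.2)) ∘ (Ek k))
        = fun p : ℤ × ℤ × ℤ =>
        (gX p.1 * gY (k - p.1 - p.2.1 - p.2.2)) * (fX p.2.1 * fY p.2.2) := by
      funext p
      obtain ⟨m, n, b⟩ := p
      simp only [Function.comp_apply, Ek, Equiv.coe_fn_mk]
      have e1 : k - (n + b) - (k - m - n - b) = m := by ring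
      have e2 : n + b - b = n := by ring
      rw [e1, e2]
    rw [this]
    exact hS
  -- evaluate the inner Y-convolution
  have hV : ∀ t : ℤ, (∑' b : ℤ, gY (t - b) * fY b)
      = if t = 0 then Real.exp (-(2 * lam2)) else 0 := by
    intro t
    rw [← (Equiv.neg ℤ).tsum_eq (fun b => gY (t - b) * fY b)]
    have hcong : ∀ b : ℤ, gY (t - (Equiv.neg ℤ) b) * fY ((Equiv.neg ℤ) b)
        = (-1:ℝ)^t * (((-1:ℝ)^b * pois lam2 b) * pois lam2 (-t - b)) := by
      intro b
      simp only [Equiv.neg_apply]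
      rw [hfY' (-b), neg_neg]
      have e1 : t - -b = t + b := by ring
      rw [e1]
      show (-1:ℝ)^(t+b) * pois lam2 (-(t+b)) * pois lam2 b
        = (-1:ℝ)^t * (((-1:ℝ)^b * pois lam2 b) * pois lam2 (-t - b))
      rw [zpow_add₀ hneg1]
      have e2 : -(t + b) = -t - b := by ring
      rw [e2]; ring
    rw [tsum_congr hcong, tsum_mul_left, key_conv h2 (-t)]
    by_cases ht : t = 0
    · simp [ht]
    · rw [if_neg (by omega), if_neg ht, mul_zero]
  -- main calculation
  calc ∑' j : ℤ, gZ (k - j) * fZ j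
      = ∑' j : ℤ, ∑' q : ℤ × ℤ,
          (gX (k - j - q.1) * gY q.1) * (fX (j - q.2) * fY q.2) := by
        apply tsum_congr; intro j
        rw [hgZ' (k - j), hfZ j]
        have := tsum_mul_tsum_of_summable_norm (hA j) (hB j)
        convert this using 2 <;> ring_nf
    _ = ∑' p : ℤ × ℤ × ℤ,
          (gX (k - p.1 - p.2.1) * gY p.2.1) * (fX (p.1 - p.2.2) * fY p.2.2) :=
        (Summable.tsum_prod' hT hTj).symm
    _ = ∑' p : ℤ × ℤ × ℤ,
          (gX p.1 * gY (k - p.1 - p.2.1 - p.2.2)) * (fX p.2.1 * fY p.2.2) := by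
        rw [← (Ek k).tsum_eq (fun p : ℤ × ℤ × ℤ =>
          (gX (k - p.1 - p.2.1) * gY p.2.1) * (fX (p.1 - p.2.2) * fY p.2.2))]
        apply tsum_congr
        rintro ⟨m, n, b⟩
        simp only [Ek, Equiv.coe_fn_mk]
        have e1 : k - (n + b) - (k - m - n - b) = m := by ring
        have e2 : n + b - b = n := by ring
        rw [e1, e2]
    _ = ∑' m : ℤ, ∑' q : ℤ × ℤ,
          (gX m * gY (k - m - q.1 - q.2)) * (fX q.1 * fY q.2) :=
        Summable.tsum_prod' hS hSm
    _ = ∑' m : ℤ, ∑' n : ℤ, ∑' b : ℤ,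
          (gX m * gY (k - m - n - b)) * (fX n * fY b) :=
        tsum_congr fun m => Summable.tsum_prod' (hSm m) (fun n => hSmn m n)
    _ = ∑' m : ℤ, ∑' n : ℤ, (gX m * fX n) * (∑' b : ℤ, gY (k - m - n - b) * fY b) := by
        apply tsum_congr; intro m; apply tsum_congr; intro n
        rw [← tsum_mul_left]
        apply tsum_congr; intro b; ring
    _ = ∑' m : ℤ, (gX m * fX (k - m)) * Real.exp (-(2 * lam2)) := by
        apply tsum_congr; intro m
        rw [tsum_eq_single (k - m) ?_]
        · rw [hV]; simp
        · intro n hn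
          rw [hV, if_neg (by omega), mul_zero]
    _ = (∑' m : ℤ, gX m * fX (k - m)) * Real.exp (-(2 * lam2)) := tsum_mul_right
    _ = (if k = 0 then Real.exp (-(2 * lam1)) else 0) * Real.exp (-(2 * lam2)) := by
        rw [show (∑' m : ℤ, gX m * fX (k - m))
            = ∑' m : ℤ, ((-1:ℝ)^m * pois lam1 m) * pois lam1 (k - m) from
          tsum_congr (fun m => by rw [hfX', hgXd]), key_conv h1 k]
    _ = if k = 0 then Real.exp (-(2 * (lam1 + lam2))) else 0 := by
        split_ifs
        · rw [← Real.exp_add]; congr 1; ring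
        · rw [zero_mul]
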